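/- Suppose ν ∈ ℝ^m and μ ∈ ℝ^n have all entries strictly positive, T_E(ν,μ) is nonempty, and there exists C ⊆ I with ∑_{j∈N_{E∖E_r}(C)} μ_j > ∑_{i∈C} ν_i, where E_r is the set of redundant edges of T_E(ν,μ). Then δ_E(ν,μ) = δ_{E∖E_r}(ν,μ), where each CRP-gap is computed for the indicated edge set with respect to that edge set's own redundant edges; i.e., removing the redundant edges does not change the CRP-gap. -/

import Mathlib

open scoped Classical

noncomputable section

variable {m n : ℕ}

/-- The transportation polytope `T_E(ν,μ)`: nonnegative `m × n` matrices with row sums `ν`,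
column sums `μ`, supported on the edge set `E`. -/
def transportationPolytope (ν : Fin m → ℝ) (μ : Fin n → ℝ)
    (E : Finset (Fin m × Fin n)) : Set (Fin m → Fin n → ℝ) :=
  {x | (∀ i j, 0 ≤ x i j) ∧ (∀ i, ∑ j, x i j = ν i) ∧
    (∀ j, ∑ i, x i j = μ j) ∧ ∀ i j, (i, j) ∉ E → x i j = 0}

/-- The neighborhood `N_F(S) = {j : ∃ i ∈ S, (i,j) ∈ F}`. -/
def nbr (F : Finset (Fin m × Fin n)) (S : Finset (Fin m)) : Finset (Fin n) :=
  Finset.univ.filter fun j => ∃ i ∈ S, (i, j) ∈ F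

/-- `ν` satisfies the capacity condition for `(μ, E)`. -/
def capacityCond (ν : Fin m → ℝ) (μ : Fin n → ℝ) (E : Finset (Fin m × Fin n)) : Prop :=
  ∀ S : Finset (Fin m), ∑ i ∈ S, ν i ≤ ∑ j ∈ nbr E S, μ j

/-- The CRP condition for `(ν, μ, E)`. -/
def crpCond (ν : Fin m → ℝ) (μ : Fin n → ℝ) (E : Finset (Fin m × Fin n)) : Prop :=
  (∑ i, ν i) = (∑ j, μ j) ∧
  ∀ S : Finset (Fin m), S.Nonempty → S ≠ Finset.univ →
    ∑ i ∈ S, ν i < ∑ j ∈ nbr E S, μ j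

/-- The bipartite simple graph `G(F)` on `I ⊔ J` determined by the edge set `F`. -/
def bipartiteGraph (F : Finset (Fin m × Fin n)) : SimpleGraph (Fin m ⊕ Fin n) :=
  SimpleGraph.fromRel fun u v => ∃ i j, u = Sum.inl i ∧ v = Sum.inr j ∧ (i, j) ∈ F

/-- The number of connected components of `G(F)`. -/
def numComponents (F : Finset (Fin m × Fin n)) : ℕ :=
  Nat.card (bipartiteGraph F).ConnectedComponent

/-- The set `E_r` of redundant edges of `T_E(ν,μ)`. -/
def redundantEdges (ν : Fin m → ℝ) (μ : Fin n → ℝ)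
    (E : Finset (Fin m × Fin n)) : Finset (Fin m × Fin n) :=
  E.filter fun e => ∀ x ∈ transportationPolytope ν μ E, x e.1 e.2 = 0

/-- The ERP number of `T_E(ν,μ)`: the number of connected components of `G(E ∖ E_r)`. -/
def erpNumber (ν : Fin m → ℝ) (μ : Fin n → ℝ) (E : Finset (Fin m × Fin n)) : ℕ :=
  numComponents (E \ redundantEdges ν μ E)

/-- The support edge set `B(x) = {(i,j) ∈ E : x_{ij} > 0}`. -/
def supportEdges (E : Finset (Fin m × Fin n)) (x : Fin m → Fin n → ℝ) :
    Finset (Fin m × Fin n) :=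
  E.filter fun e => 0 < x e.1 e.2

/-- The indicator vector `𝟙_S ∈ ℝ^m` of `S ⊆ I`. -/
def indicatorVec (S : Finset (Fin m)) : Fin m → ℝ := fun i => if i ∈ S then 1 else 0

/-- `S ⊆ I` is binding if `∑_{i∈S} ν_i = ∑_{j∈N_E(S)} μ_j`. -/
def IsBinding (ν : Fin m → ℝ) (μ : Fin n → ℝ) (E : Finset (Fin m × Fin n))
    (S : Finset (Fin m)) : Prop :=
  (∑ i ∈ S, ν i) = ∑ j ∈ nbr E S, μ j

/-- The greatest common divisor of all `m + n` components of `ν` and `μ`. -/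
def gcdVec (ν : Fin m → ℕ) (μ : Fin n → ℕ) : ℕ :=
  Nat.gcd (Finset.univ.gcd ν) (Finset.univ.gcd μ)

/-- `d_⋆ = max {1, m + n − (∑ᵢ νᵢ) / gcd(ν,μ)}`. -/
def dStar (ν : Fin m → ℕ) (μ : Fin n → ℕ) : ℕ :=
  max 1 (m + n - (∑ i, ν i) / gcdVec ν μ)

/-- The CRP-gap `δ_F(ν,μ)` of the edge set `F` (computed with respect to the redundant
edges of `T_F(ν,μ)`). -/
def crpGap (ν : Fin m → ℝ) (μ : Fin n → ℝ) (F : Finset (Fin m × Fin n)) : ℝ :=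
  sInf {t : ℝ | ∃ C : Finset (Fin m),
    (∑ i ∈ C, ν i) < (∑ j ∈ nbr (F \ redundantEdges ν μ F) C, μ j) ∧
    t = (∑ j ∈ nbr F C, μ j) - ∑ i ∈ C, ν i}

/-- The CRP-graph relation `R` on the connected components of `G(E ∖ E_r)`:
`R c₁ c₂` holds iff `c₁ ≠ c₂` and some edge `(i,j) ∈ E` has `i` in the demand side of `c₁`
and `j` in the supply side of `c₂`. -/
def crpRel (ν : Fin m → ℝ) (μ : Fin n → ℝ) (E : Finset (Fin m × Fin n)) :
    (bipartiteGraph (E \ redundantEdges ν μ E)).ConnectedComponent →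
    (bipartiteGraph (E \ redundantEdges ν μ E)).ConnectedComponent → Prop :=
  fun c₁ c₂ => c₁ ≠ c₂ ∧ ∃ i j, (i, j) ∈ E ∧
    (bipartiteGraph (E \ redundantEdges ν μ E)).connectedComponentMk (Sum.inl i) = c₁ ∧
    (bipartiteGraph (E \ redundantEdges ν μ E)).connectedComponentMk (Sum.inr j) = c₂

end

noncomputable section CRPAux

open Finset

namespace CRP14

variable {m n : ℕ}

lemma mem_nbr {F : Finset (Fin m × Fin n)} {S : Finset (Fin m)} {j : Fin n} :
    j ∈ nbr F S ↔ ∃ i ∈ S, (i, j) ∈ F := by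
  simp [nbr]

lemma nbr_mono_set {F : Finset (Fin m × Fin n)} {S T : Finset (Fin m)} (h : S ⊆ T) :
    nbr F S ⊆ nbr F T := by
  intro j hj
  rcases mem_nbr.1 hj with ⟨i, hi, hij⟩
  exact mem_nbr.2 ⟨i, h hi, hij⟩

lemma nbr_mono_edge {F F' : Finset (Fin m × Fin n)} {S : Finset (Fin m)} (h : F ⊆ F') :
    nbr F S ⊆ nbr F' S := by
  intro j hj
  rcases mem_nbr.1 hj with ⟨i, hi, hij⟩
  exact mem_nbr.2 ⟨i, hi, h hij⟩

lemma nbr_union {F : Finset (Fin m × Fin n)} {S T : Finset (Fin m)} :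
    nbr F (S ∪ T) = nbr F S ∪ nbr F T := by
  ext j
  simp only [mem_nbr, mem_union]
  constructor
  · rintro ⟨i, hi | hi, hij⟩
    · exact Or.inl ⟨i, hi, hij⟩
    · exact Or.inr ⟨i, hi, hij⟩
  · rintro (⟨i, hi, hij⟩ | ⟨i, hi, hij⟩)
    · exact ⟨i, Or.inl hi, hij⟩
    · exact ⟨i, Or.inr hi, hij⟩

/-- Bundle of standing hypotheses: `E' ⊆ E` is the set of non-redundant edges,
`xs` is a point of the polytope with support exactly `E'`. -/
structure Good (ν : Fin m → ℝ) (μ : Fin n → ℝ) (E E' : Finset (Fin m × Fin n))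
    (xs : Fin m → Fin n → ℝ) : Prop where
  mem : xs ∈ transportationPolytope ν μ E
  sub : E' ⊆ E
  supp : ∀ i j, 0 < xs i j ↔ (i, j) ∈ E'
  red : ∀ e ∈ E, e ∉ E' → ∀ y ∈ transportationPolytope ν μ E, y e.1 e.2 = 0
  hmu : ∀ j, 0 < μ j

variable {ν : Fin m → ℝ} {μ : Fin n → ℝ} {E E' : Finset (Fin m × Fin n)}
  {xs : Fin m → Fin n → ℝ}

namespace Good

lemma nonneg (h : Good ν μ E E' xs) : ∀ i j, 0 ≤ xs i j := h.mem.1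

lemma rowsum (h : Good ν μ E E' xs) : ∀ i, ∑ j, xs i j = ν i := h.mem.2.1

lemma colsum (h : Good ν μ E E' xs) : ∀ j, ∑ i, xs i j = μ j := h.mem.2.2.1

lemma supp0 (h : Good ν μ E E' xs) {i : Fin m} {j : Fin n} (hij : (i, j) ∉ E') :
    xs i j = 0 := by
  rcases lt_or_eq_of_le (h.nonneg i j) with hlt | heq
  · exact absurd ((h.supp i j).1 hlt) hij
  · exact heq.symm

/-- Hall's inequality for `E'`. -/
lemma hall (h : Good ν μ E E' xs) (S : Finset (Fin m)) :
    ∑ i ∈ S, ν i ≤ ∑ j ∈ nbr E' S, μ j := by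
  have key : ∀ i ∈ S, ν i = ∑ j ∈ nbr E' S, xs i j := by
    intro i hi
    rw [← h.rowsum i]
    refine (Finset.sum_subset (Finset.subset_univ _) ?_).symm
    intro j _ hj
    refine h.supp0 fun hij => hj (mem_nbr.2 ⟨i, hi, hij⟩)
  calc ∑ i ∈ S, ν i = ∑ i ∈ S, ∑ j ∈ nbr E' S, xs i j := Finset.sum_congr rfl key
    _ = ∑ j ∈ nbr E' S, ∑ i ∈ S, xs i j := Finset.sum_comm
    _ ≤ ∑ j ∈ nbr E' S, ∑ i, xs i j := by
        refine Finset.sum_le_sum fun j _ => ?_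
        exact Finset.sum_le_sum_of_subset_of_nonneg (Finset.subset_univ _)
          (fun i _ _ => h.nonneg i j)
    _ = ∑ j ∈ nbr E' S, μ j := Finset.sum_congr rfl fun j _ => h.colsum j

end Good

end CRP14

namespace CRP14

variable {m n : ℕ} {ν : Fin m → ℝ} {μ : Fin n → ℝ} {E E' : Finset (Fin m × Fin n)}
  {xs : Fin m → Fin n → ℝ}

/-- One alternating step: from demand node `i` via an `E`-edge to a supply node `j`,
then back via an `E'`-edge to demand node `i'`. -/
def Step (E E' : Finset (Fin m × Fin n)) (i i' : Fin m) : Prop :=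
  ∃ j, (i, j) ∈ E ∧ (i', j) ∈ E'

/-- `i'` is reachable from supply node `j₀` by alternating steps. -/
def Reach (E E' : Finset (Fin m × Fin n)) (j₀ : Fin n) (i' : Fin m) : Prop :=
  ∃ i₁, (i₁, j₀) ∈ E' ∧ Relation.ReflTransGen (Step E E') i₁ i'

/-- A point of the "deficit polytope": like the transportation polytope, but with
`ε` removed from row `i'` and from column `j₀`. -/
def Deficit (ν : Fin m → ℝ) (μ : Fin n → ℝ) (E : Finset (Fin m × Fin n))
    (ε : ℝ) (i' : Fin m) (j₀ : Fin n) : Prop :=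
  ∃ z : Fin m → Fin n → ℝ, (∀ a b, 0 ≤ z a b) ∧
    (∀ a b, (a, b) ∉ E → z a b = 0) ∧
    (∀ a, ∑ b, z a b = ν a - if a = i' then ε else 0) ∧
    (∀ b, ∑ a, z a b = μ b - if b = j₀ then ε else 0)

namespace Good

/-- If `i'` is reachable from `j₀`, one can withdraw a small amount `ε`
flowing from `j₀` to `i'`. -/
lemma deficit_of_reach (h : Good ν μ E E' xs) {j₀ : Fin n} {i' : Fin m}
    (hr : Reach E E' j₀ i') : ∃ ε > 0, Deficit ν μ E ε i' j₀ := by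
  obtain ⟨i₁, h₁, hpath⟩ := hr
  induction hpath with
  | refl =>
    refine ⟨xs i₁ j₀, (h.supp _ _).2 h₁, fun a b => xs a b -
      if a = i₁ ∧ b = j₀ then xs i₁ j₀ else 0, ?_, ?_, ?_, ?_⟩
    · intro a b
      dsimp only
      by_cases hab : a = i₁ ∧ b = j₀
      · simp [hab.1, hab.2]
      · simp [hab, h.nonneg a b]
    · intro a b hab
      dsimp only
      have h0 : xs a b = 0 := h.mem.2.2.2 a b hab
      by_cases hab' : a = i₁ ∧ b = j₀
      · rw [hab'.1, hab'.2] at h0; simp [hab', h0]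
      · simp [hab', h0]
    · intro a
      dsimp only
      rw [Finset.sum_sub_distrib, h.rowsum a]
      congr 1
      by_cases ha : a = i₁
      · subst ha
        rw [Finset.sum_eq_single j₀] <;> simp +contextual
      · rw [Finset.sum_eq_zero] <;> simp +contextual [ha]
    · intro b
      dsimp only
      rw [Finset.sum_sub_distrib, h.colsum b]
      congr 1
      by_cases hb : b = j₀
      · subst hb
        rw [Finset.sum_eq_single i₁] <;> simp +contextual
      · rw [Finset.sum_eq_zero] <;> simp +contextual [hb]
  | @tail i i'' hpath hstep ih =>
    obtain ⟨ε, hε, z, hz0, hzE, hzr, hzc⟩ := ih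
    obtain ⟨j, hijE, hi''j⟩ := hstep
    set x0 : ℝ := xs i'' j with hx0
    have hx0pos : 0 < x0 := (h.supp _ _).2 hi''j
    set t : ℝ := x0 / (2 * (x0 + ε)) with ht
    have hden : 0 < x0 + ε := by linarith
    have htpos : 0 < t := by positivity
    have ht1 : t < 1 := by
      rw [ht, div_lt_one (by linarith)]
      linarith
    have hkey : t * (x0 + ε) = x0 / 2 := by
      rw [ht, div_mul_eq_mul_div, div_eq_div_iff (ne_of_gt (by linarith)) (by norm_num)]
      ring
    refine ⟨t * ε, by positivity, fun a b => (1 - t) * xs a b + t * z a b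
      + ((if a = i ∧ b = j then t * ε else 0) - (if a = i'' ∧ b = j then t * ε else 0)),
      ?_, ?_, ?_, ?_⟩
    · intro a b
      dsimp only
      by_cases hab : a = i'' ∧ b = j
      · obtain ⟨rfl, rfl⟩ := hab
        have hz0' : 0 ≤ z a b := hz0 a b
        have hD : 0 ≤ t * z a b := by positivity
        have hb1 : (0:ℝ) ≤ if a = i ∧ b = b then t * ε else 0 := by positivity
        have hb2 : (if a = a ∧ b = b then t * ε else 0) = t * ε := by simp
        rw [hb2, ← hx0]
        have hlin : (1 - t) * x0 - t * ε = x0 - t * (x0 + ε) := by ring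
        linarith [hkey, hb1, hD, hx0pos]
      · have h2 : (0:ℝ) ≤ (if a = i ∧ b = j then t * ε else 0) := by positivity
        have h3 : (if a = i'' ∧ b = j then t * ε else 0) = 0 := by simp [hab]
        have h4 : 0 ≤ (1 - t) * xs a b := by
          have := h.nonneg a b; nlinarith
        have h5 : 0 ≤ t * z a b := by
          have := hz0 a b; positivity
        rw [h3]
        linarith
    · intro a b hab
      dsimp only
      have h1 : xs a b = 0 := h.mem.2.2.2 a b hab
      have h2 : z a b = 0 := hzE a b hab
      have h3 : ¬ (a = i ∧ b = j) := by
        rintro ⟨rfl, rfl⟩; exact hab hijE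
      have h4 : ¬ (a = i'' ∧ b = j) := by
        rintro ⟨rfl, rfl⟩; exact hab (h.sub hi''j)
      simp [h1, h2, h3, h4]
    · intro a
      dsimp only
      rw [Finset.sum_add_distrib, Finset.sum_add_distrib, ← Finset.mul_sum,
        ← Finset.mul_sum, h.rowsum a, hzr a, Finset.sum_sub_distrib]
      have e1 : ∑ b, (if a = i ∧ b = j then t * ε else 0) = if a = i then t * ε else 0 := by
        by_cases ha : a = i
        · rw [Finset.sum_eq_single j] <;> simp +contextual [ha]
        · rw [Finset.sum_eq_zero] <;> simp +contextual [ha]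
      have e2 : ∑ b, (if a = i'' ∧ b = j then t * ε else 0)
          = if a = i'' then t * ε else 0 := by
        by_cases ha : a = i''
        · rw [Finset.sum_eq_single j] <;> simp +contextual [ha]
        · rw [Finset.sum_eq_zero] <;> simp +contextual [ha]
      rw [e1, e2]
      by_cases ha : a = i''
      · subst ha
        by_cases hai : a = i <;> simp [hai] <;> ring
      · by_cases hai : a = i <;> simp [ha, hai] <;> ring
    · intro b
      dsimp only
      rw [Finset.sum_add_distrib, Finset.sum_add_distrib, ← Finset.mul_sum,
        ← Finset.mul_sum, h.colsum b, hzc b, Finset.sum_sub_distrib]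
      have e1 : ∑ a, (if a = i ∧ b = j then t * ε else 0) = if b = j then t * ε else 0 := by
        by_cases hb : b = j
        · rw [Finset.sum_eq_single i] <;> simp +contextual [hb]
        · rw [Finset.sum_eq_zero] <;> simp +contextual [hb]
      have e2 : ∑ a, (if a = i'' ∧ b = j then t * ε else 0)
          = if b = j then t * ε else 0 := by
        by_cases hb : b = j
        · rw [Finset.sum_eq_single i''] <;> simp +contextual [hb]
        · rw [Finset.sum_eq_zero] <;> simp +contextual [hb]
      rw [e1, e2]
      by_cases hb : b = j₀ <;> simp [hb] <;> ring

end Good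

end CRP14

namespace CRP14

open Finset

variable {m n : ℕ} {ν : Fin m → ℝ} {μ : Fin n → ℝ} {E E' : Finset (Fin m × Fin n)}
  {xs : Fin m → Fin n → ℝ}

namespace Good

/-- Combining deficits along a closed cycle of redundant edges yields a feasible point
positive on a redundant edge: impossible. -/
lemma no_cycle (h : Good ν μ E E' xs) {k : ℕ} (hk : 0 < k)
    (jj : ℕ → Fin n) (ii : ℕ → Fin m)
    (hcyc : jj k = jj 0)
    (hE : ∀ t < k, (ii t, jj t) ∈ E)
    (hEr : ∀ t < k, (ii t, jj t) ∉ E')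
    (hreach : ∀ t < k, Reach E E' (jj (t + 1)) (ii t)) : False := by
  have hQ : ∀ t : ℕ, ∃ ε : ℝ, ∃ z : Fin m → Fin n → ℝ, t < k →
      (0 < ε ∧ (∀ a b, 0 ≤ z a b) ∧ (∀ a b, (a, b) ∉ E → z a b = 0) ∧
       (∀ a, ∑ b, z a b = ν a - if a = ii t then ε else 0) ∧
       (∀ b, ∑ a, z a b = μ b - if b = jj (t + 1) then ε else 0)) := by
    intro t
    by_cases ht : t < k
    · obtain ⟨ε, hε, z, hz⟩ := h.deficit_of_reach (hreach t ht)
      exact ⟨ε, z, fun _ => ⟨hε, hz⟩⟩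
    · exact ⟨1, xs, fun hc => absurd hc ht⟩
  choose εf zf hf using hQ
  set S : ℝ := ∑ t ∈ Finset.range k, (εf t)⁻¹ with hS
  have hSpos : 0 < S := by
    apply Finset.sum_pos
    · intro t ht
      exact inv_pos.2 (hf t (Finset.mem_range.1 ht)).1
    · exact Finset.nonempty_range_iff.2 hk.ne'
  set ε : ℝ := S⁻¹ with hε
  have hεpos : 0 < ε := inv_pos.2 hSpos
  set c : ℕ → ℝ := fun t => ε * (εf t)⁻¹ with hc
  have hcε : ∀ t < k, c t * εf t = ε := by
    intro t ht
    have : εf t ≠ 0 := (hf t ht).1.ne'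
    show ε * (εf t)⁻¹ * εf t = ε
    rw [mul_assoc, inv_mul_cancel₀ this, mul_one]
  have hcnn : ∀ t < k, 0 ≤ c t := by
    intro t ht
    have := (hf t ht).1
    positivity
  have hcsum : ∑ t ∈ Finset.range k, c t = 1 := by
    rw [hc, ← Finset.mul_sum, ← hS, hε]
    field_simp
  set z : Fin m → Fin n → ℝ := fun a b => ∑ t ∈ Finset.range k, c t * zf t a b with hzdef
  set y : Fin m → Fin n → ℝ := fun a b =>
    z a b + ε * ∑ t ∈ Finset.range k, (if a = ii t ∧ b = jj t then (1:ℝ) else 0) with hydef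
  have ind1 : ∀ (i0 : Fin m) (j0 : Fin n) (a : Fin m),
      ∑ b, (if a = i0 ∧ b = j0 then (1:ℝ) else 0) = if a = i0 then 1 else 0 := by
    intro i0 j0 a
    by_cases ha : a = i0
    · rw [if_pos ha, Finset.sum_eq_single j0] <;> simp +contextual [ha]
    · rw [if_neg ha, Finset.sum_eq_zero]
      simp +contextual [ha]
  have ind2 : ∀ (i0 : Fin m) (j0 : Fin n) (b : Fin n),
      ∑ a, (if a = i0 ∧ b = j0 then (1:ℝ) else 0) = if b = j0 then 1 else 0 := by
    intro i0 j0 b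
    by_cases hb : b = j0
    · rw [if_pos hb, Finset.sum_eq_single i0] <;> simp +contextual [hb]
    · rw [if_neg hb, Finset.sum_eq_zero]
      simp +contextual [hb]
  have hznn : ∀ a b, 0 ≤ z a b := by
    intro a b
    refine Finset.sum_nonneg fun t ht => ?_
    have h1 := hcnn t (Finset.mem_range.1 ht)
    have h2 := ((hf t (Finset.mem_range.1 ht)).2.1) a b
    positivity
  have hzsupp : ∀ a b, (a, b) ∉ E → z a b = 0 := by
    intro a b hab
    refine Finset.sum_eq_zero fun t ht => ?_
    rw [(hf t (Finset.mem_range.1 ht)).2.2.1 a b hab, mul_zero]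
  have hymem : y ∈ transportationPolytope ν μ E := by
    refine ⟨?_, ?_, ?_, ?_⟩
    · intro a b
      simp only [hydef]
      have h1 := hznn a b
      have h2 : (0:ℝ) ≤ ∑ t ∈ Finset.range k, (if a = ii t ∧ b = jj t then (1:ℝ) else 0) :=
        Finset.sum_nonneg fun t _ => by positivity
      positivity
    · intro a
      simp only [hydef]
      rw [Finset.sum_add_distrib, ← Finset.mul_sum]
      have e1 : ∑ t ∈ Finset.range k, ∑ b, (if a = ii t ∧ b = jj t then (1:ℝ) else 0)
          = ∑ t ∈ Finset.range k, (if a = ii t then (1:ℝ) else 0) :=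
        Finset.sum_congr rfl fun t _ => ind1 _ _ _
      have e2 : ∑ b, z a b
          = ν a - ε * ∑ t ∈ Finset.range k, (if a = ii t then (1:ℝ) else 0) := by
        simp only [hzdef]
        rw [Finset.sum_comm]
        have e3 : ∀ t ∈ Finset.range k, ∑ b, c t * zf t a b
            = c t * ν a - ε * (if a = ii t then (1:ℝ) else 0) := by
          intro t ht
          have htk := Finset.mem_range.1 ht
          rw [← Finset.mul_sum, (hf t htk).2.2.2.1 a]
          by_cases ha : a = ii t
          · rw [if_pos ha, if_pos ha, mul_sub, hcε t htk, mul_one]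
          · rw [if_neg ha, if_neg ha]; ring
        rw [Finset.sum_congr rfl e3, Finset.sum_sub_distrib, ← Finset.sum_mul, hcsum,
          one_mul, ← Finset.mul_sum]
      rw [e2, Finset.sum_comm, e1]
      ring
    · intro b
      simp only [hydef]
      rw [Finset.sum_add_distrib, ← Finset.mul_sum]
      have e1 : ∑ t ∈ Finset.range k, ∑ a, (if a = ii t ∧ b = jj t then (1:ℝ) else 0)
          = ∑ t ∈ Finset.range k, (if b = jj t then (1:ℝ) else 0) :=
        Finset.sum_congr rfl fun t _ => ind2 _ _ _
      have e2 : ∑ a, z a b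
          = μ b - ε * ∑ t ∈ Finset.range k, (if b = jj (t + 1) then (1:ℝ) else 0) := by
        simp only [hzdef]
        rw [Finset.sum_comm]
        have e3 : ∀ t ∈ Finset.range k, ∑ a, c t * zf t a b
            = c t * μ b - ε * (if b = jj (t + 1) then (1:ℝ) else 0) := by
          intro t ht
          have htk := Finset.mem_range.1 ht
          rw [← Finset.mul_sum, (hf t htk).2.2.2.2 b]
          by_cases hb : b = jj (t + 1)
          · rw [if_pos hb, if_pos hb, mul_sub, hcε t htk, mul_one]
          · rw [if_neg hb, if_neg hb]; ring
        rw [Finset.sum_congr rfl e3, Finset.sum_sub_distrib, ← Finset.sum_mul, hcsum,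
          one_mul, ← Finset.mul_sum]
      have eshift : ∑ t ∈ Finset.range k, (if b = jj (t + 1) then (1:ℝ) else 0)
          = ∑ t ∈ Finset.range k, (if b = jj t then (1:ℝ) else 0) := by
        have h1 := Finset.sum_range_succ' (fun t => if b = jj t then (1:ℝ) else 0) k
        have h2 := Finset.sum_range_succ (fun t => if b = jj t then (1:ℝ) else 0) k
        rw [hcyc] at h2
        rw [h2] at h1
        linarith
      rw [e2, eshift, Finset.sum_comm, e1]
      ring
    · intro a b hab
      simp only [hydef]
      rw [hzsupp a b hab, Finset.sum_eq_zero, mul_zero, add_zero]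
      intro t ht
      rw [if_neg]
      rintro ⟨rfl, rfl⟩
      exact hab (hE t (Finset.mem_range.1 ht))
  have hypos : 0 < y (ii 0) (jj 0) := by
    simp only [hydef]
    have h1 : (1:ℝ) ≤ ∑ t ∈ Finset.range k, (if ii 0 = ii t ∧ jj 0 = jj t then (1:ℝ) else 0) := by
      have h0 : (0:ℕ) ∈ Finset.range k := Finset.mem_range.2 hk
      have := Finset.single_le_sum (f := fun t => if ii 0 = ii t ∧ jj 0 = jj t then (1:ℝ) else 0)
        (fun t _ => by positivity) h0
      simpa using this
    have h2 := hznn (ii 0) (jj 0)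
    nlinarith
  have := h.red (ii 0, jj 0) (hE 0 hk) (hEr 0 hk) y hymem
  rw [this] at hypos
  exact lt_irrefl 0 hypos

end Good

end CRP14

namespace CRP14

open Finset

variable {m n : ℕ} {ν : Fin m → ℝ} {μ : Fin n → ℝ} {E E' : Finset (Fin m × Fin n)}
  {xs : Fin m → Fin n → ℝ}

/-- The stray neighbors of `C`: `E`-neighbors that are not `E'`-neighbors. -/
def strayS (E E' : Finset (Fin m × Fin n)) (C : Finset (Fin m)) : Finset (Fin n) :=
  nbr E C \ nbr E' C

/-- All demand nodes reachable from the stray neighbors of `C`. -/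
def VSet (E E' : Finset (Fin m × Fin n)) (C : Finset (Fin m)) : Finset (Fin m) :=
  Finset.univ.filter fun i' => ∃ j ∈ strayS E E' C, Reach E E' j i'

namespace Good

variable {C : Finset (Fin m)}

lemma vset_closed {i i' : Fin m} {j : Fin n}
    (hiV : i ∈ VSet E E' C) (hij : (i, j) ∈ E) (hi'j : (i', j) ∈ E') :
    i' ∈ VSet E E' C := by
  rcases Finset.mem_filter.1 hiV with ⟨-, js, hjs, i₁, h₁, hpath⟩
  exact Finset.mem_filter.2 ⟨Finset.mem_univ _,
    js, hjs, i₁, h₁, hpath.tail ⟨j, hij, hi'j⟩⟩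

lemma exists_pos_col (h : Good ν μ E E' xs) (j : Fin n) : ∃ i, 0 < xs i j := by
  by_contra hcon
  push_neg at hcon
  have : ∑ i, xs i j = 0 :=
    Finset.sum_eq_zero fun i _ => le_antisymm (hcon i) (h.nonneg i j)
  rw [h.colsum j] at this
  exact absurd this (h.hmu j).ne'

lemma stray_mem_nbr_vset (h : Good ν μ E E' xs) {j : Fin n} (hj : j ∈ strayS E E' C) :
    j ∈ nbr E' (VSet E E' C) := by
  obtain ⟨i, hi⟩ := h.exists_pos_col j
  have hij : (i, j) ∈ E' := (h.supp i j).1 hi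
  have hiV : i ∈ VSet E E' C := Finset.mem_filter.2 ⟨Finset.mem_univ _,
    j, hj, i, hij, Relation.ReflTransGen.refl⟩
  exact mem_nbr.2 ⟨i, hiV, hij⟩

lemma nbr_vset_eq (h : Good ν μ E E' xs) :
    nbr E (VSet E E' C) = nbr E' (VSet E E' C) := by
  refine Finset.Subset.antisymm ?_ (nbr_mono_edge h.sub)
  intro j hj
  rcases mem_nbr.1 hj with ⟨i, hiV, hij⟩
  obtain ⟨i', hi'⟩ := h.exists_pos_col j
  have hi'j : (i', j) ∈ E' := (h.supp i' j).1 hi'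
  exact mem_nbr.2 ⟨i', vset_closed hiV hij hi'j, hi'j⟩

/-- The reach set `V` is binding. -/
lemma vset_binding (h : Good ν μ E E' xs) :
    ∑ j ∈ nbr E' (VSet E E' C), μ j = ∑ i ∈ VSet E E' C, ν i := by
  set V := VSet E E' C with hV
  have key1 : ∀ j ∈ nbr E' V, μ j = ∑ i ∈ V, xs i j := by
    intro j hj
    rw [← h.colsum j]
    refine (Finset.sum_subset (Finset.subset_univ _) ?_).symm
    intro i _ hiV
    by_contra hpos
    have hxpos : 0 < xs i j :=
      lt_of_le_of_ne (h.nonneg i j) (Ne.symm hpos)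
    have hij : (i, j) ∈ E' := (h.supp i j).1 hxpos
    rcases mem_nbr.1 hj with ⟨i0, hi0V, hi0j⟩
    exact hiV (vset_closed hi0V (h.sub hi0j) hij)
  have key2 : ∀ i ∈ V, ∑ j ∈ nbr E' V, xs i j = ν i := by
    intro i hi
    rw [← h.rowsum i]
    refine Finset.sum_subset (Finset.subset_univ _) ?_
    intro j _ hj
    by_contra hpos
    have hxpos : 0 < xs i j := lt_of_le_of_ne (h.nonneg i j) (Ne.symm hpos)
    have hij : (i, j) ∈ E' := (h.supp i j).1 hxpos
    exact hj (mem_nbr.2 ⟨i, hi, hij⟩)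
  calc ∑ j ∈ nbr E' V, μ j = ∑ j ∈ nbr E' V, ∑ i ∈ V, xs i j :=
        Finset.sum_congr rfl key1
    _ = ∑ i ∈ V, ∑ j ∈ nbr E' V, xs i j := Finset.sum_comm
    _ = ∑ i ∈ V, ν i := Finset.sum_congr rfl key2

lemma nbr_inter_vset (h : Good ν μ E E' xs) :
    nbr E' C ∩ nbr E' (VSet E E' C) = nbr E' (C ∩ VSet E E' C) := by
  refine Finset.Subset.antisymm ?_ ?_
  · intro j hj
    rcases Finset.mem_inter.1 hj with ⟨hjC, hjV⟩
    rcases mem_nbr.1 hjC with ⟨i, hiC, hij⟩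
    rcases mem_nbr.1 hjV with ⟨i0, hi0V, hi0j⟩
    have hiV : i ∈ VSet E E' C := vset_closed hi0V (h.sub hi0j) hij
    exact mem_nbr.2 ⟨i, Finset.mem_inter.2 ⟨hiC, hiV⟩, hij⟩
  · intro j hj
    rcases mem_nbr.1 hj with ⟨i, hi, hij⟩
    rcases Finset.mem_inter.1 hi with ⟨hiC, hiV⟩
    exact Finset.mem_inter.2 ⟨mem_nbr.2 ⟨i, hiC, hij⟩, mem_nbr.2 ⟨i, hiV, hij⟩⟩

/-- If `C` has a stray neighbor, then `C` is not contained in its reach set `V`. -/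
lemma not_subset_vset (h : Good ν μ E E' xs) (hstray : (strayS E E' C).Nonempty)
    (hsub : C ⊆ VSet E E' C) : False := by
  obtain ⟨js0, hjs0⟩ := hstray
  have hwit : ∀ js : Fin n, ∃ i : Fin m,
      js ∈ strayS E E' C → (i ∈ C ∧ (i, js) ∈ E ∧ (i, js) ∉ E') := by
    intro js
    by_cases hjs : js ∈ strayS E E' C
    · rcases Finset.mem_sdiff.1 hjs with ⟨hjE, hjE'⟩
      rcases mem_nbr.1 hjE with ⟨i, hiC, hij⟩
      refine ⟨i, fun _ => ⟨hiC, hij, fun hcon => hjE' (mem_nbr.2 ⟨i, hiC, hcon⟩)⟩⟩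
    · rcases Finset.mem_sdiff.1 hjs0 with ⟨hjE, hjE'⟩
      rcases mem_nbr.1 hjE with ⟨i, hiC, hij⟩
      exact ⟨i, fun hcon => absurd hcon hjs⟩
  choose w hw using hwit
  have hsig : ∀ js : Fin n, ∃ j' : Fin n,
      js ∈ strayS E E' C → (j' ∈ strayS E E' C ∧ Reach E E' j' (w js)) := by
    intro js
    by_cases hjs : js ∈ strayS E E' C
    · have hiV : w js ∈ VSet E E' C := hsub (hw js hjs).1
      rcases Finset.mem_filter.1 hiV with ⟨-, j', hj', hr⟩
      exact ⟨j', fun _ => ⟨hj', hr⟩⟩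
    · exact ⟨js0, fun hcon => absurd hcon hjs⟩
  choose σ hσ using hsig
  set seq : ℕ → Fin n := fun t => σ^[t] js0 with hseqdef
  have hseq : ∀ t, seq t ∈ strayS E E' C := by
    intro t
    induction t with
    | zero => exact hjs0
    | succ t ihs =>
      have : seq (t + 1) = σ (seq t) := Function.iterate_succ_apply' σ t js0
      rw [this]
      exact (hσ (seq t) ihs).1
  obtain ⟨a, b, hab, heq⟩ := Finite.exists_ne_map_eq_of_infinite seq
  have key : ∀ a b : ℕ, a < b → seq a = seq b → False := by
    intro a b hlt heq
    set k := b - a with hk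
    have hkpos : 0 < k := by omega
    set jj : ℕ → Fin n := fun t => seq (a + t) with hjj
    have hjjS : ∀ t, jj t ∈ strayS E E' C := fun t => hseq _
    set ii : ℕ → Fin m := fun t => w (jj t) with hii
    have hcyc : jj k = jj 0 := by
      simp only [hjj]
      have hab' : a + k = b := by omega
      rw [add_zero, hab', ← heq]
    refine h.no_cycle hkpos jj ii hcyc ?_ ?_ ?_
    · intro t ht
      exact (hw (jj t) (hjjS t)).2.1
    · intro t ht
      exact (hw (jj t) (hjjS t)).2.2
    · intro t ht
      have hstep : jj (t + 1) = σ (jj t) := by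
        simp only [hjj, hseqdef]
        have h1 : a + (t + 1) = (a + t) + 1 := by omega
        rw [h1]
        exact Function.iterate_succ_apply' σ (a + t) js0
      rw [hstep]
      exact (hσ (jj t) (hjjS t)).2
  rcases hab.lt_or_gt with hlt | hlt
  · exact key a b hlt heq
  · exact key b a hlt heq.symm

end Good

end CRP14

namespace CRP14

open Finset

variable {m n : ℕ} {ν : Fin m → ℝ} {μ : Fin n → ℝ} {E E' : Finset (Fin m × Fin n)}
  {xs : Fin m → Fin n → ℝ}

lemma nbr_empty {F : Finset (Fin m × Fin n)} : nbr F (∅ : Finset (Fin m)) = ∅ := by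
  ext j
  simp [mem_nbr]

namespace Good

/-- Main lemma: any set `C` with a positive `E'`-gap can be improved to a set `D` with
no stray neighbors whose `E'`-gap is positive and no larger. -/
lemma main (h : Good ν μ E E' xs) :
    ∀ N : ℕ, ∀ C : Finset (Fin m), C.card ≤ N →
    (∑ i ∈ C, ν i < ∑ j ∈ nbr E' C, μ j) →
    ∃ D : Finset (Fin m), (∑ i ∈ D, ν i < ∑ j ∈ nbr E' D, μ j) ∧
      nbr E D = nbr E' D ∧
      (∑ j ∈ nbr E' D, μ j) - ∑ i ∈ D, ν i ≤ (∑ j ∈ nbr E' C, μ j) - ∑ i ∈ C, ν i := by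
  intro N
  induction N with
  | zero =>
    intro C hcard hg
    have hC : C = ∅ := Finset.card_eq_zero.1 (Nat.le_zero.1 hcard)
    subst hC
    rw [nbr_empty] at hg
    simp at hg
  | succ N ih =>
    intro C hcard hg
    by_cases hstray : (strayS E E' C).Nonempty
    · set V := VSet E E' C with hV
      have hnsub : ¬ C ⊆ V := fun hsub => h.not_subset_vset hstray hsub
      obtain ⟨istar, histarC, histarV⟩ : ∃ i, i ∈ C ∧ i ∉ V := by
        by_contra hcon
        push_neg at hcon
        exact hnsub fun i hi => hcon i hi
      have key1 : ∑ j ∈ nbr E' (C ∪ V), μ j + ∑ j ∈ nbr E' (C ∩ V), μ j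
          = ∑ j ∈ nbr E' C, μ j + ∑ j ∈ nbr E' V, μ j := by
        rw [nbr_union, ← h.nbr_inter_vset]
        exact Finset.sum_union_inter
      have key2 : ∑ i ∈ C ∪ V, ν i + ∑ i ∈ C ∩ V, ν i
          = ∑ i ∈ C, ν i + ∑ i ∈ V, ν i := Finset.sum_union_inter
      have hbind := h.vset_binding (C := C)
      have hallI := h.hall (C ∩ V)
      have hallU := h.hall (C ∪ V)
      by_cases hP : ∑ i ∈ C ∪ V, ν i < ∑ j ∈ nbr E' (C ∪ V), μ j
      · refine ⟨C ∪ V, hP, ?_, ?_⟩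
        · refine Finset.Subset.antisymm ?_ (nbr_mono_edge h.sub)
          intro j hj
          rcases mem_nbr.1 hj with ⟨i, hi, hij⟩
          by_cases hij' : (i, j) ∈ E'
          · exact mem_nbr.2 ⟨i, hi, hij'⟩
          rcases Finset.mem_union.1 hi with hiC | hiV
          · by_cases hjC : j ∈ nbr E' C
            · exact nbr_mono_set Finset.subset_union_left hjC
            · have hjS : j ∈ strayS E E' C :=
                Finset.mem_sdiff.2 ⟨mem_nbr.2 ⟨i, hiC, hij⟩, hjC⟩
              exact nbr_mono_set Finset.subset_union_right (h.stray_mem_nbr_vset hjS)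
          · have hjV : j ∈ nbr E V := mem_nbr.2 ⟨i, hiV, hij⟩
            rw [h.nbr_vset_eq] at hjV
            exact nbr_mono_set Finset.subset_union_right hjV
        · linarith
      · have hQpos : ∑ i ∈ C ∩ V, ν i < ∑ j ∈ nbr E' (C ∩ V), μ j := by
          push_neg at hP
          linarith
        have hcard' : (C ∩ V).card ≤ N := by
          have hss : C ∩ V ⊂ C := by
            refine (Finset.ssubset_iff_of_subset Finset.inter_subset_left).2 ?_
            exact ⟨istar, histarC, fun hmem => histarV (Finset.mem_inter.1 hmem).2⟩
          have := Finset.card_lt_card hss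
          omega
        obtain ⟨D, h1, h2, h3⟩ := ih (C ∩ V) hcard' hQpos
        refine ⟨D, h1, h2, ?_⟩
        push_neg at hP
        linarith
    · refine ⟨C, hg, ?_, le_refl _⟩
      refine Finset.Subset.antisymm ?_ (nbr_mono_edge h.sub)
      intro j hj
      by_contra hjC
      exact hstray ⟨j, Finset.mem_sdiff.2 ⟨hj, hjC⟩⟩

end Good

end CRP14

namespace CRP14

open Finset

variable {m n : ℕ} {ν : Fin m → ℝ} {μ : Fin n → ℝ} {E : Finset (Fin m × Fin n)}

/-- Removing the redundant edges does not change the polytope. -/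
lemma tp_sdiff_eq :
    transportationPolytope ν μ (E \ redundantEdges ν μ E) = transportationPolytope ν μ E := by
  ext x
  constructor
  · rintro ⟨h0, hr, hc, hs⟩
    exact ⟨h0, hr, hc, fun i j hij =>
      hs i j fun hmem => hij (Finset.mem_sdiff.1 hmem).1⟩
  · rintro ⟨h0, hr, hc, hs⟩
    refine ⟨h0, hr, hc, fun i j hij => ?_⟩
    by_cases hE : (i, j) ∈ E
    · have hred : (i, j) ∈ redundantEdges ν μ E := by
        by_contra hnred
        exact hij (Finset.mem_sdiff.2 ⟨hE, hnred⟩)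
      exact (Finset.mem_filter.1 hred).2 x ⟨h0, hr, hc, hs⟩
    · exact hs i j hE

/-- Existence of a point of the polytope whose support is exactly the set of
non-redundant edges. -/
lemma exists_good (hμ : ∀ j, 0 < μ j)
    (hne : (transportationPolytope ν μ E).Nonempty) :
    ∃ xs, Good ν μ E (E \ redundantEdges ν μ E) xs := by
  obtain ⟨x₀, hx₀⟩ := hne
  set E' := E \ redundantEdges ν μ E with hE'
  have hwit : ∀ e : Fin m × Fin n, ∃ y, e ∈ E' →
      (y ∈ transportationPolytope ν μ E ∧ 0 < y e.1 e.2) := by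
    intro e
    by_cases he : e ∈ E'
    · rcases Finset.mem_sdiff.1 he with ⟨heE, her⟩
      have hnall : ¬ (∀ x ∈ transportationPolytope ν μ E, x e.1 e.2 = 0) := by
        intro hall
        exact her (Finset.mem_filter.2 ⟨heE, hall⟩)
      push_neg at hnall
      obtain ⟨y, hy, hyne⟩ := hnall
      exact ⟨y, fun _ => ⟨hy, lt_of_le_of_ne (hy.1 e.1 e.2) (Ne.symm hyne)⟩⟩
    · exact ⟨x₀, fun hc => absurd hc he⟩
  choose g hg using hwit
  set k := E'.card with hk
  set cst : ℝ := ((k : ℝ) + 1)⁻¹ with hcst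
  have hkpos : (0:ℝ) < (k : ℝ) + 1 := by positivity
  have hcpos : 0 < cst := by rw [hcst]; positivity
  set xs : Fin m → Fin n → ℝ :=
    fun i j => cst * (x₀ i j + ∑ e ∈ E'.attach, g e.1 i j) with hxs
  have hxsnn : ∀ i j, 0 ≤ xs i j := by
    intro i j
    simp only [hxs]
    have h1 := hx₀.1 i j
    have h2 : (0:ℝ) ≤ ∑ e ∈ E'.attach, g e.1 i j :=
      Finset.sum_nonneg fun e _ => (hg e.1 e.2).1.1 i j
    nlinarith
  have hxsmem : xs ∈ transportationPolytope ν μ E := by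
    refine ⟨hxsnn, ?_, ?_, ?_⟩
    · intro i
      simp only [hxs]
      rw [← Finset.mul_sum, Finset.sum_add_distrib, hx₀.2.1 i, Finset.sum_comm,
        Finset.sum_congr rfl (fun e _ => (hg e.1 e.2).1.2.1 i), Finset.sum_const,
        Finset.card_attach, nsmul_eq_mul, hcst, ← hk]
      have harith : ν i + (k : ℝ) * ν i = ((k : ℝ) + 1) * ν i := by ring
      rw [harith, ← mul_assoc, inv_mul_cancel₀ hkpos.ne', one_mul]
    · intro j
      simp only [hxs]
      rw [← Finset.mul_sum, Finset.sum_add_distrib, hx₀.2.2.1 j, Finset.sum_comm,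
        Finset.sum_congr rfl (fun e _ => (hg e.1 e.2).1.2.2.1 j), Finset.sum_const,
        Finset.card_attach, nsmul_eq_mul, hcst, ← hk]
      have harith : μ j + (k : ℝ) * μ j = ((k : ℝ) + 1) * μ j := by ring
      rw [harith, ← mul_assoc, inv_mul_cancel₀ hkpos.ne', one_mul]
    · intro i j hij
      simp only [hxs]
      rw [hx₀.2.2.2 i j hij,
        Finset.sum_eq_zero fun e _ => (hg e.1 e.2).1.2.2.2 i j hij]
      ring
  refine ⟨xs, hxsmem, Finset.sdiff_subset, ?_, ?_, hμ⟩
  · intro i j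
    constructor
    · intro hpos
      by_contra hij'
      have hzero : ∀ y ∈ transportationPolytope ν μ E, y i j = 0 := by
        by_cases hE : (i, j) ∈ E
        · have hred : (i, j) ∈ redundantEdges ν μ E := by
            by_contra hc
            exact hij' (Finset.mem_sdiff.2 ⟨hE, hc⟩)
          exact (Finset.mem_filter.1 hred).2
        · exact fun y hy => hy.2.2.2 i j hE
      have : xs i j = 0 := by
        simp only [hxs]
        rw [hzero x₀ hx₀, Finset.sum_eq_zero fun e _ => hzero _ (hg e.1 e.2).1]
        ring
      rw [this] at hpos
      exact lt_irrefl _ hpos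
    · intro hij
      have hmem : (⟨(i, j), hij⟩ : {x // x ∈ E'}) ∈ E'.attach := Finset.mem_attach _ _
      have hsum : g (i, j) i j ≤ ∑ e ∈ E'.attach, g e.1 i j :=
        Finset.single_le_sum (f := fun e : {x // x ∈ E'} => g e.1 i j)
          (fun e _ => (hg e.1 e.2).1.1 i j) hmem
      have hpos := (hg (i, j) hij).2
      have h0 := hx₀.1 i j
      simp only [hxs]
      have hin : 0 < x₀ i j + ∑ e ∈ E'.attach, g e.1 i j := by
        dsimp only at hpos
        linarith
      exact mul_pos hcpos hin
  · intro e heE heE' y hy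
    have hred : e ∈ redundantEdges ν μ E := by
      by_contra hc
      exact heE' (Finset.mem_sdiff.2 ⟨heE, hc⟩)
    exact (Finset.mem_filter.1 hred).2 y hy

/-- The polytope of the reduced edge set has no redundant edges at all. -/
lemma red_sdiff_empty {xs : Fin m → Fin n → ℝ}
    (h : Good ν μ E (E \ redundantEdges ν μ E) xs) :
    redundantEdges ν μ (E \ redundantEdges ν μ E) = ∅ := by
  rw [Finset.eq_empty_iff_forall_notMem]
  intro e he
  obtain ⟨i, j⟩ := e
  rcases Finset.mem_filter.1 he with ⟨heE', hall⟩
  have hmem : xs ∈ transportationPolytope ν μ (E \ redundantEdges ν μ E) := by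
    rw [tp_sdiff_eq]
    exact h.mem
  have h1 : xs i j = 0 := hall xs hmem
  have h2 : 0 < xs i j := (h.supp i j).2 heE'
  rw [h1] at h2
  exact lt_irrefl _ h2

end CRP14

end CRPAux
/-- removing the redundant edges does not change the CRP-gap, where each
CRP-gap is computed with respect to the redundant edges of its own edge set. -/
theorem stmt_14 {m n : ℕ} (hm : 1 ≤ m) (hn : 1 ≤ n)
    (ν : Fin m → ℝ) (μ : Fin n → ℝ) (E : Finset (Fin m × Fin n))
    (hν : ∀ i, 0 < ν i) (hμ : ∀ j, 0 < μ j)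
    (hne : (transportationPolytope ν μ E).Nonempty)
    (hC : ∃ C : Finset (Fin m),
      (∑ i ∈ C, ν i) < ∑ j ∈ nbr (E \ redundantEdges ν μ E) C, μ j) :
    crpGap ν μ E = crpGap ν μ (E \ redundantEdges ν μ E) := by
    classical
  obtain ⟨xs, hgood⟩ := CRP14.exists_good hμ hne
  have hre : redundantEdges ν μ (E \ redundantEdges ν μ E) = ∅ :=
    CRP14.red_sdiff_empty hgood
  unfold crpGap
  rw [hre, Finset.sdiff_empty]
  have hmono : ∀ C : Finset (Fin m),
      (∑ j ∈ nbr (E \ redundantEdges ν μ E) C, μ j) ≤ ∑ j ∈ nbr E C, μ j := fun C =>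
    Finset.sum_le_sum_of_subset_of_nonneg
      (CRP14.nbr_mono_edge Finset.sdiff_subset) (fun j _ _ => (hμ j).le)
  obtain ⟨C₀, hC₀⟩ := hC
  have hAne : Set.Nonempty {t : ℝ | ∃ C : Finset (Fin m),
      (∑ i ∈ C, ν i) < (∑ j ∈ nbr (E \ redundantEdges ν μ E) C, μ j) ∧
      t = (∑ j ∈ nbr E C, μ j) - ∑ i ∈ C, ν i} :=
    ⟨_, C₀, hC₀, rfl⟩
  have hBne : Set.Nonempty {t : ℝ | ∃ C : Finset (Fin m),
      (∑ i ∈ C, ν i) < (∑ j ∈ nbr (E \ redundantEdges ν μ E) C, μ j) ∧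
      t = (∑ j ∈ nbr (E \ redundantEdges ν μ E) C, μ j) - ∑ i ∈ C, ν i} :=
    ⟨_, C₀, hC₀, rfl⟩
  have hAbdd : BddBelow {t : ℝ | ∃ C : Finset (Fin m),
      (∑ i ∈ C, ν i) < (∑ j ∈ nbr (E \ redundantEdges ν μ E) C, μ j) ∧
      t = (∑ j ∈ nbr E C, μ j) - ∑ i ∈ C, ν i} := by
    refine ⟨0, ?_⟩
    rintro t ⟨C, h1, rfl⟩
    have := hmono C
    linarith
  have hBbdd : BddBelow {t : ℝ | ∃ C : Finset (Fin m),
      (∑ i ∈ C, ν i) < (∑ j ∈ nbr (E \ redundantEdges ν μ E) C, μ j) ∧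
      t = (∑ j ∈ nbr (E \ redundantEdges ν μ E) C, μ j) - ∑ i ∈ C, ν i} := by
    refine ⟨0, ?_⟩
    rintro t ⟨C, h1, rfl⟩
    linarith
  apply le_antisymm
  · refine le_csInf hBne ?_
    rintro b ⟨C, h1, rfl⟩
    obtain ⟨D, hD1, hD2, hD3⟩ := hgood.main C.card C le_rfl h1
    have hmemA : (∑ j ∈ nbr E D, μ j) - ∑ i ∈ D, ν i ∈ {t : ℝ | ∃ C : Finset (Fin m),
        (∑ i ∈ C, ν i) < (∑ j ∈ nbr (E \ redundantEdges ν μ E) C, μ j) ∧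
        t = (∑ j ∈ nbr E C, μ j) - ∑ i ∈ C, ν i} := ⟨D, hD1, rfl⟩
    calc sInf _ ≤ (∑ j ∈ nbr E D, μ j) - ∑ i ∈ D, ν i := csInf_le hAbdd hmemA
      _ = (∑ j ∈ nbr (E \ redundantEdges ν μ E) D, μ j) - ∑ i ∈ D, ν i := by rw [hD2]
      _ ≤ _ := hD3
  · refine le_csInf hAne ?_
    rintro a ⟨C, h1, rfl⟩
    have hmemB : (∑ j ∈ nbr (E \ redundantEdges ν μ E) C, μ j) - ∑ i ∈ C, ν i ∈
        {t : ℝ | ∃ C : Finset (Fin m),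
        (∑ i ∈ C, ν i) < (∑ j ∈ nbr (E \ redundantEdges ν μ E) C, μ j) ∧
        t = (∑ j ∈ nbr (E \ redundantEdges ν μ E) C, μ j) - ∑ i ∈ C, ν i} := ⟨C, h1, rfl⟩
    have h2 := csInf_le hBbdd hmemB
    have h3 := hmono C
    linarith
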